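/- Let (Ω, 𝔽, μ) be a probability space, 𝒳 a measurable space, X : Ω → 𝒳 measurable, Y : Ω → ℝ integrable, and let γ₀, γ̄, α₀, ᾱ : 𝒳 → ℝ be bounded measurable functions such that γ₀ ∘ X is a version of the conditional expectation of Y given the σ-algebra generated by X. If either ᾱ(X) = α₀(X) μ-almost everywhere or γ̄(X) = γ₀(X) μ-almost everywhere, then ∫ ( α₀(X)·γ̄(X) + ᾱ(X)·(Y − γ̄(X)) ) dμ = ∫ α₀(X)·γ₀(X) dμ. That is, the (Riesz-represented) augmented score has mean equal to the target θ₀ when either nuisance is correctly specified (double robustness), and in particular the Neyman orthogonal score has mean zero at the true nuisances. -/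

import Mathlib

open MeasureTheory

lemma key_int_aux {Ω : Type*} {m0 : MeasurableSpace Ω} (μ : Measure Ω) [IsProbabilityMeasure μ]
    {m : MeasurableSpace Ω} (hm : m ≤ m0)
    {f Y : Ω → ℝ} (hf : StronglyMeasurable[m] f) {C : ℝ} (hfb : ∀ ω, |f ω| ≤ C)
    (hY : Integrable Y μ) :
    ∫ ω, f ω * Y ω ∂μ = ∫ ω, f ω * (μ[Y|m]) ω ∂μ := by
  have hfam : @AEStronglyMeasurable Ω ℝ _ m0 m0 f μ := (hf.mono hm).aestronglyMeasurable
  have hfY : Integrable (f * Y) μ := hY.bdd_mul (c := C) hfam (ae_of_all _ fun ω => by simpa using hfb ω)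
  have h := condExp_mul_of_stronglyMeasurable_left hf hfY hY
  calc ∫ ω, f ω * Y ω ∂μ = ∫ ω, (μ[f * Y|m]) ω ∂μ := (integral_condExp hm).symm
    _ = ∫ ω, f ω * (μ[Y|m]) ω ∂μ := integral_congr_ae h

/-- Double robustness: if either the representer or the regression nuisance is
correctly specified, the augmented score has mean equal to the target
`θ₀ = ∫ α₀(X)·γ₀(X) dμ`. -/
theorem double_robustness
    {Ω : Type*} [MeasurableSpace Ω] (μ : Measure Ω) [IsProbabilityMeasure μ]
    {𝒳 : Type*} [MeasurableSpace 𝒳]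
    (X : Ω → 𝒳) (hX : Measurable X)
    (Y : Ω → ℝ) (hY : Integrable Y μ)
    (γ₀ γbar α₀ αbar : 𝒳 → ℝ)
    (hγ₀ : Measurable γ₀) (hγbar : Measurable γbar)
    (hα₀ : Measurable α₀) (hαbar : Measurable αbar)
    (hγ₀b : ∃ Cγ₀ : ℝ, ∀ x, |γ₀ x| ≤ Cγ₀)
    (hγbarb : ∃ Cγ : ℝ, ∀ x, |γbar x| ≤ Cγ)
    (hα₀b : ∃ Cα₀ : ℝ, ∀ x, |α₀ x| ≤ Cα₀)
    (hαbarb : ∃ Cα : ℝ, ∀ x, |αbar x| ≤ Cα)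
    (hcond : (fun ω => γ₀ (X ω)) =ᵐ[μ] μ[Y | MeasurableSpace.comap X inferInstance])
    (hrobust : ((fun ω => αbar (X ω)) =ᵐ[μ] fun ω => α₀ (X ω))
        ∨ ((fun ω => γbar (X ω)) =ᵐ[μ] fun ω => γ₀ (X ω))) :
    ∫ ω, (α₀ (X ω) * γbar (X ω) + αbar (X ω) * (Y ω - γbar (X ω))) ∂μ
      = ∫ ω, α₀ (X ω) * γ₀ (X ω) ∂μ := by
  set m : MeasurableSpace Ω := MeasurableSpace.comap X inferInstance with hmdef
  have hm := hX.comap_le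
  have hXm : Measurable[m] X := Measurable.of_comap_le le_rfl
  -- strong measurability of composites w.r.t. m
  have hα₀m : StronglyMeasurable[m] (fun ω => α₀ (X ω)) :=
    (hα₀.comp hXm).stronglyMeasurable
  have hαbarm : StronglyMeasurable[m] (fun ω => αbar (X ω)) :=
    (hαbar.comp hXm).stronglyMeasurable
  obtain ⟨Cα₀, hCα₀⟩ := hα₀b
  obtain ⟨Cα, hCα⟩ := hαbarb
  obtain ⟨Cγ₀, hCγ₀⟩ := hγ₀b
  obtain ⟨Cγ, hCγ⟩ := hγbarb
  -- key identities: ∫ f(X)·Y = ∫ f(X)·γ₀(X)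
  have key : ∀ (f : 𝒳 → ℝ), StronglyMeasurable[m] (fun ω => f (X ω)) →
      ∀ C : ℝ, (∀ x, |f x| ≤ C) →
      ∫ ω, f (X ω) * Y ω ∂μ = ∫ ω, f (X ω) * γ₀ (X ω) ∂μ := by
    intro f hfm C hfC
    have h1 := key_int_aux μ hm hfm (C := C) (fun ω => hfC (X ω)) hY
    rw [h1]
    refine integral_congr_ae ?_
    filter_upwards [hcond] with ω hω
    rw [← hω]
  -- integrability helpers
  have hintbdd : ∀ (f g : 𝒳 → ℝ), Measurable f → Measurable g →
      (∃ C : ℝ, ∀ x, |f x| ≤ C) → (∃ C : ℝ, ∀ x, |g x| ≤ C) →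
      Integrable (fun ω => f (X ω) * g (X ω)) μ := by
    intro f g hf hg ⟨Cf, hCf⟩ ⟨Cg, hCg⟩
    have hgint : Integrable (fun ω => g (X ω)) μ := by
      have := (integrable_const (1 : ℝ) (μ := μ)).bdd_mul
        (c := Cg) ((hg.comp hX).aestronglyMeasurable) (ae_of_all _ fun ω => by simpa using hCg (X ω))
      simpa using this
    exact hgint.bdd_mul (c := Cf) ((hf.comp hX).aestronglyMeasurable)
      (ae_of_all _ fun ω => by simpa using hCf (X ω))
  have hYbdd : ∀ (f : 𝒳 → ℝ), Measurable f → (∃ C : ℝ, ∀ x, |f x| ≤ C) →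
      Integrable (fun ω => f (X ω) * Y ω) μ := by
    intro f hf ⟨Cf, hCf⟩
    exact hY.bdd_mul (c := Cf) ((hf.comp hX).aestronglyMeasurable)
      (ae_of_all _ fun ω => by simpa using hCf (X ω))
  rcases hrobust with hαeq | hγeq
  · -- αbar = α₀ a.e.: integrand = α₀(X)·Y a.e.
    have h1 : ∫ ω, (α₀ (X ω) * γbar (X ω) + αbar (X ω) * (Y ω - γbar (X ω))) ∂μ
        = ∫ ω, α₀ (X ω) * Y ω ∂μ := by
      refine integral_congr_ae ?_
      filter_upwards [hαeq] with ω hω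
      rw [hω]; ring
    rw [h1]
    exact key α₀ hα₀m Cα₀ hCα₀
  · -- γbar = γ₀ a.e.
    have h1 : ∫ ω, (α₀ (X ω) * γbar (X ω) + αbar (X ω) * (Y ω - γbar (X ω))) ∂μ
        = ∫ ω, (α₀ (X ω) * γ₀ (X ω) + (αbar (X ω) * Y ω - αbar (X ω) * γ₀ (X ω))) ∂μ := by
      refine integral_congr_ae ?_
      filter_upwards [hγeq] with ω hω
      rw [hω]; ring
    rw [h1]
    have hi1 : Integrable (fun ω => α₀ (X ω) * γ₀ (X ω)) μ :=
      hintbdd α₀ γ₀ hα₀ hγ₀ ⟨Cα₀, hCα₀⟩ ⟨Cγ₀, hCγ₀⟩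
    have hi2 : Integrable (fun ω => αbar (X ω) * Y ω) μ := hYbdd αbar hαbar ⟨Cα, hCα⟩
    have hi3 : Integrable (fun ω => αbar (X ω) * γ₀ (X ω)) μ :=
      hintbdd αbar γ₀ hαbar hγ₀ ⟨Cα, hCα⟩ ⟨Cγ₀, hCγ₀⟩
    have hi23 : Integrable (fun ω => αbar (X ω) * Y ω - αbar (X ω) * γ₀ (X ω)) μ :=
      hi2.sub hi3
    rw [integral_add hi1 hi23, integral_sub hi2 hi3, key αbar hαbarm Cα hCα]
    ring
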